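/- A vector y : V* → ZMod 2 belongs to the simplex code C_S(b) if and only if y(c₁) + y(c₂) + y(c₁ + c₂) = 0 for all distinct c₁, c₂ ∈ V* with c₁ + c₂ ≠ 0. In other words, the simplex code is exactly the kernel of the parity-check matrix whose rows are all such weight-3 checks. -/

import Mathlib

/-- A vector `y : V* → ZMod 2` belongs to the simplex code
`C_S(b) = range Φ_E` if and only if `y c₁ + y c₂ + y (c₁ + c₂) = 0` for all distinct
`c₁, c₂ ∈ V*` with `c₁ + c₂ ≠ 0`; i.e. the simplex code is exactly the kernel of the
parity-check matrix whose rows are all such weight-3 checks. -/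
theorem simplex_code_eq_kernel_of_weight_three_checks (b : ℕ) (hb : 1 ≤ b)
    (ΦB : GaloisField 2 b ≃ₗ[ZMod 2] (Fin b → ZMod 2))
    (ΦE : GaloisField 2 b → ({v : Fin b → ZMod 2 // v ≠ 0} → ZMod 2))
    (hΦE : ∀ (X : GaloisField 2 b) (c : {v : Fin b → ZMod 2 // v ≠ 0}),
      ΦE X c = ∑ e : Fin b, (c : Fin b → ZMod 2) e * ΦB X e)
    (y : {v : Fin b → ZMod 2 // v ≠ 0} → ZMod 2) :
    y ∈ Set.range ΦE ↔
      ∀ (c₁ c₂ : {v : Fin b → ZMod 2 // v ≠ 0}) (_ : c₁ ≠ c₂)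
        (hs : (c₁ : Fin b → ZMod 2) + (c₂ : Fin b → ZMod 2) ≠ 0),
        y c₁ + y c₂ + y ⟨(c₁ : Fin b → ZMod 2) + (c₂ : Fin b → ZMod 2), hs⟩ = 0 := by
  have two : ∀ x : ZMod 2, x + x = 0 := by decide
  constructor
  · rintro ⟨X, rfl⟩ c₁ c₂ hne hs
    simp only [hΦE]
    rw [← Finset.sum_add_distrib, ← Finset.sum_add_distrib]
    apply Finset.sum_eq_zero
    intro e _
    have he : ((c₁ : Fin b → ZMod 2) + (c₂ : Fin b → ZMod 2)) e
        = (c₁ : Fin b → ZMod 2) e + (c₂ : Fin b → ZMod 2) e := rfl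
    rw [he, add_mul]
    linear_combination two ((c₁ : Fin b → ZMod 2) e * ΦB X e
      + (c₂ : Fin b → ZMod 2) e * ΦB X e)
  · intro h
    set f : (Fin b → ZMod 2) → ZMod 2 :=
      fun v => if hv : v = 0 then 0 else y ⟨v, hv⟩ with hf
    have f0 : f 0 = 0 := by simp [hf]
    have fadd : ∀ u v, f (u + v) = f u + f v := by
      intro u v
      by_cases hu : u = 0
      · subst hu; simp [f0]
      by_cases hv : v = 0
      · subst hv; simp [f0]
      by_cases hs : u + v = 0
      · have huv : v = u := by
          funext e
          have h1 : u e + v e = 0 := congrFun hs e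
          have h2 := two (u e)
          linear_combination h1 - h2
        subst huv
        rw [hs, f0]
        exact (two (f v)).symm
      · have hne : (⟨u, hu⟩ : {v : Fin b → ZMod 2 // v ≠ 0}) ≠ ⟨v, hv⟩ := by
          intro hq
          apply hs
          have huv : u = v := congrArg Subtype.val hq
          subst huv
          funext e
          exact two (u e)
        have hc := h ⟨u, hu⟩ ⟨v, hv⟩ hne hs
        have : f (u + v) = y ⟨u + v, hs⟩ := dif_neg hs
        rw [this]
        have h1 : f u = y ⟨u, hu⟩ := dif_neg hu
        have h2 : f v = y ⟨v, hv⟩ := dif_neg hv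
        rw [h1, h2]
        linear_combination hc - two (y ⟨u, hu⟩) - two (y ⟨v, hv⟩)
    have fsmul : ∀ (m : ZMod 2) v, f (m • v) = m • f v := by
      intro m v
      fin_cases m
      · show f ((0 : ZMod 2) • v) = (0 : ZMod 2) • f v
        simp [f0]
      · show f ((1 : ZMod 2) • v) = (1 : ZMod 2) • f v
        simp
    let F : (Fin b → ZMod 2) →ₗ[ZMod 2] ZMod 2 :=
      { toFun := f, map_add' := fadd, map_smul' := fsmul }
    have key : ∀ v : Fin b → ZMod 2,
        F v = ∑ e, v e * F (fun j => if e = j then 1 else 0) := by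
      intro v
      conv_lhs => rw [pi_eq_sum_univ v]
      rw [map_sum]
      simp [smul_eq_mul]
    refine ⟨ΦB.symm (fun e => F (fun j => if e = j then 1 else 0)), ?_⟩
    funext c
    rw [hΦE]
    have : ΦB (ΦB.symm (fun e => F (fun j => if e = j then 1 else 0)))
        = fun e => F (fun j => if e = j then 1 else 0) := ΦB.apply_symm_apply _
    rw [this, ← key]
    show f (c : Fin b → ZMod 2) = y c
    simp only [hf]
    rw [dif_neg c.2]
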